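/- For real x > 1, ((x−1)/(2x−1))·((x/(x−1))^{2x−1} − 1) = 2 + K_{n=1}^∞ b_n/a_n, where b_n = (n+1)(2x−n−2)/x and a_n = (n+1)(x+1)/x. -/

import Mathlib

open Real Filter

/-- Finite continued fraction approximant of depth `N`:
`cf b a N = b 1 / (a 1 + b 2 / (a 2 + ... + b N / a N))`. -/
noncomputable def cf (b a : ℕ → ℝ) (N : ℕ) : ℝ :=
  (List.range N).foldr (fun i acc => b (i + 1) / (a (i + 1) + acc)) 0

namespace CFAux

noncomputable def bb (x : ℝ) (n : ℕ) : ℝ := ((n : ℝ) + 1) * (2 * x - n - 2) / x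
noncomputable def aa (x : ℝ) (n : ℕ) : ℝ := ((n : ℝ) + 1) * (x + 1) / x

noncomputable def T (x : ℝ) : ℕ → ℕ → ℝ
  | _, 0 => 0
  | m, (N+1) => bb x (m+1) / (aa x (m+1) + T x (m+1) N)

noncomputable def K (x : ℝ) : ℕ → ℕ → ℝ
  | _, 0 => 1
  | m, 1 => aa x (m+1)
  | m, (N+2) => aa x (m+1) * K x (m+1) (N+1) + bb x (m+2) * K x (m+2) N

noncomputable def co (x : ℝ) : ℕ → ℝ
  | 0 => 1
  | (k+1) => co x k * ((k:ℝ) + 1 - 2*x) / ((k:ℝ) + 1)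

noncomputable def g (x : ℝ) (k : ℕ) : ℝ := co x k * (1/x)^k

noncomputable def Cq (j : ℝ) : ℝ := (j+1)*(j+2)/2

noncomputable def S (x : ℝ) (n : ℕ) : ℝ := ∑ k ∈ Finset.range (n+1), g x k * Cq ((n:ℝ) - (k:ℝ))

noncomputable def Av (x : ℝ) : ℝ := (1-x)/(2*x-1)

noncomputable def Vv (x : ℝ) (n : ℕ) : ℝ := ((n:ℝ)+2) - Av x * Cq ((n:ℝ))

noncomputable def W (x : ℝ) (n : ℕ) : ℝ := (Av x - 2) * S x n + Vv x n

noncomputable def pp (x : ℝ) : ℕ → ℝ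
  | 0 => 0
  | (N+1) => bb x 1 * K x 1 N

variable {x : ℝ}

lemma g_succ (hx : x ≠ 0) (k : ℕ) :
    g x (k+1) = g x k * (2*x - 1 - k) * (-(1/x)) / ((k:ℝ)+1) := by
  have hk : ((k:ℝ) + 1) ≠ 0 := by positivity
  simp only [g, co, pow_succ]
  field_simp
  ring

lemma S_ext (n : ℕ) : S x (n+1) = ∑ k ∈ Finset.range (n+2), g x k * Cq ((n:ℝ) + 1 - (k:ℝ)) := by
  simp only [S]
  push_cast
  rfl

lemma Cq_neg_one : Cq (-1) = 0 := by simp [Cq]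

lemma Cq_neg_two : Cq (-2) = 0 := by norm_num [Cq]

lemma Skey (hx : x ≠ 0) (N : ℕ) :
    x * ((N:ℝ)+2) * S x (N+2) =
      ((N:ℝ)+2)*(x+1) * S x (N+1) + (2*x - (N:ℝ) - 4) * S x N := by
  set E : ℕ → ℝ := fun k => g x k * (x * k * ((N:ℝ) + 3 - k)) with hE
  have key : ∀ k : ℕ,
      x*((N:ℝ)+2)*(g x k * Cq ((N:ℝ)+2-k)) -
      (((N:ℝ)+2)*(x+1)*(g x k * Cq ((N:ℝ)+1-k)) + (2*x-(N:ℝ)-4)*(g x k * Cq ((N:ℝ)-k)))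
      = E k - E (k+1) := by
    intro k
    have hk : ((k:ℝ) + 1) ≠ 0 := by positivity
    simp only [hE, g_succ hx k, Cq]
    push_cast
    field_simp
    ring
  -- extend sums
  have h2 : S x (N+2) = ∑ k ∈ Finset.range (N+3), g x k * Cq ((N:ℝ) + 2 - (k:ℝ)) := by
    simp only [S]; push_cast; rfl
  have h1 : S x (N+1) = ∑ k ∈ Finset.range (N+3), g x k * Cq ((N:ℝ) + 1 - (k:ℝ)) := by
    rw [S_ext]
    have e1 : ((N:ℝ) + 1 - ((N+2 : ℕ):ℝ)) = -1 := by push_cast; ring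
    symm
    rw [Finset.sum_range_succ, e1, Cq_neg_one, mul_zero, add_zero]
  have h0 : S x N = ∑ k ∈ Finset.range (N+3), g x k * Cq ((N:ℝ) - (k:ℝ)) := by
    have e1 : ((N:ℝ) - ((N+1 : ℕ):ℝ)) = -1 := by push_cast; ring
    have e2 : ((N:ℝ) - ((N+2 : ℕ):ℝ)) = -2 := by push_cast; ring
    symm
    rw [Finset.sum_range_succ, Finset.sum_range_succ, e1, e2, Cq_neg_one, Cq_neg_two,
      mul_zero, mul_zero, add_zero, add_zero]
    rfl
  have tele := Finset.sum_range_sub' E (N+3)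
  have hE0 : E 0 = 0 := by simp [hE]
  have hEtop : E (N+3) = 0 := by
    have : ((N:ℝ) + 3 - ((N+3 : ℕ):ℝ)) = 0 := by push_cast; ring
    simp only [hE]
    push_cast
    ring
  have main : x * ((N:ℝ)+2) * S x (N+2) -
      (((N:ℝ)+2)*(x+1) * S x (N+1) + (2*x - (N:ℝ) - 4) * S x N)
      = ∑ k ∈ Finset.range (N+3), (E k - E (k+1)) := by
    rw [h0, h1, h2, Finset.mul_sum, Finset.mul_sum, Finset.mul_sum,
      ← Finset.sum_add_distrib, ← Finset.sum_sub_distrib]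
    exact Finset.sum_congr rfl fun k _ => key k
  rw [tele, hE0, hEtop] at main
  linarith

lemma Vkey (hx1 : 1 < x) (N : ℕ) :
    x * ((N:ℝ)+2) * Vv x (N+2) =
      ((N:ℝ)+2)*(x+1) * Vv x (N+1) + (2*x - (N:ℝ) - 4) * Vv x N := by
  have h : (2*x - 1) ≠ 0 := by nlinarith
  have hinv : (2*x-1) * (2*x-1)⁻¹ = 1 := mul_inv_cancel₀ h
  simp only [Vv, Av, Cq]
  push_cast
  field_simp
  linear_combination (2*x-2) * hinv

lemma Wkey (hx1 : 1 < x) (N : ℕ) :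
    x * ((N:ℝ)+2) * W x (N+2) =
      ((N:ℝ)+2)*(x+1) * W x (N+1) + (2*x - (N:ℝ) - 4) * W x N := by
  have hx : x ≠ 0 := by nlinarith
  have h1 := Skey hx N
  have h2 := Vkey hx1 N
  simp only [W]
  linear_combination (Av x - 2) * h1 + h2


lemma K_zero (m : ℕ) : K x m 0 = 1 := rfl
lemma K_one (m : ℕ) : K x m 1 = aa x (m+1) := rfl
lemma K_succ2 (m N : ℕ) : K x m (N+2) = aa x (m+1) * K x (m+1) (N+1) + bb x (m+2) * K x (m+2) N := rfl
lemma T_zero (m : ℕ) : T x m 0 = 0 := rfl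
lemma T_succ (m N : ℕ) : T x m (N+1) = bb x (m+1) / (aa x (m+1) + T x (m+1) N) := rfl

lemma aa_eq (n : ℕ) : aa x (n+1) = ((n:ℝ)+2)*(x+1)/x := by
  simp only [aa]; push_cast; ring

lemma bb_eq (n : ℕ) : bb x (n+1) = ((n:ℝ)+2)*(2*x-(n:ℝ)-3)/x := by
  simp only [bb]; push_cast; ring

lemma K_tail : ∀ N m, K x m (N+2) = aa x (m+N+2) * K x m (N+1) + bb x (m+N+2) * K x m N := by
  intro N
  induction N using Nat.strong_induction_on with
  | _ N ih =>
    match N, ih with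
    | 0, _ =>
      intro m
      show K x m 2 = aa x (m+2) * aa x (m+1) + bb x (m+2) * 1
      have h1 : K x m 2 = aa x (m+1) * K x (m+1) 1 + bb x (m+2) * K x (m+2) 0 := K_succ2 m 0
      rw [h1, K_one, K_zero]
      ring
    | 1, _ =>
      intro m
      show K x m 3 = aa x (m+3) * K x m 2 + bb x (m+3) * K x m 1
      have h1 : K x m 3 = aa x (m+1) * K x (m+1) 2 + bb x (m+2) * K x (m+2) 1 := K_succ2 m 1
      have h2 : K x (m+1) 2 = aa x (m+2) * K x (m+2) 1 + bb x (m+3) * K x (m+3) 0 := K_succ2 (m+1) 0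
      have h3 : K x m 2 = aa x (m+1) * K x (m+1) 1 + bb x (m+2) * K x (m+2) 0 := K_succ2 m 0
      rw [h1, h2, h3, K_one, K_one, K_one, K_zero, K_zero]
      ring
    | (N+2), ih =>
      intro m
      have h1 := ih (N+1) (by omega) (m+1)
      have h2 := ih N (by omega) (m+2)
      rw [show (m+1) + (N+1) + 2 = m + (N+2) + 2 from by omega] at h1
      rw [show (m+2) + N + 2 = m + (N+2) + 2 from by omega] at h2
      show K x m (N+4) = aa x (m+(N+2)+2) * K x m (N+3) + bb x (m+(N+2)+2) * K x m (N+2)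
      have e1 : K x m (N+4) = aa x (m+1) * K x (m+1) (N+3) + bb x (m+2) * K x (m+2) (N+2) := K_succ2 m (N+2)
      have e2 : K x m (N+3) = aa x (m+1) * K x (m+1) (N+2) + bb x (m+2) * K x (m+2) (N+1) := K_succ2 m (N+1)
      have e3 : K x m (N+2) = aa x (m+1) * K x (m+1) (N+1) + bb x (m+2) * K x (m+2) N := K_succ2 m N
      have h1' : K x (m+1) (N+3) = aa x (m+(N+2)+2) * K x (m+1) (N+2) + bb x (m+(N+2)+2) * K x (m+1) (N+1) := h1
      have h2' : K x (m+2) (N+2) = aa x (m+(N+2)+2) * K x (m+2) (N+1) + bb x (m+(N+2)+2) * K x (m+2) N := h2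
      rw [e1, e2, e3, h1', h2']
      ring

lemma two_x_sub_one_pos (hx1 : 1 < x) : 0 < 2*x - 1 := by nlinarith

lemma T_ge (hx1 : 1 < x) :
    ∀ (N m : ℕ), min 0 ((((m:ℝ)+2)*(2*x-(m:ℝ)-3))/(((m:ℝ)+2)*x-1)) ≤ T x m N := by
  have hx0 : (0:ℝ) < x := lt_trans one_pos hx1
  intro N
  induction N with
  | zero => intro m; rw [T_zero]; exact min_le_left _ _
  | succ N ih =>
    intro m
    have hm : (0:ℝ) ≤ (m:ℝ) := Nat.cast_nonneg m
    have hd1 : (0:ℝ) < ((m:ℝ)+2)*x - 1 := by nlinarith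
    have hd2 : (0:ℝ) < ((m:ℝ)+3)*x - 1 := by nlinarith
    have hδ : (0:ℝ) < (((m:ℝ)+2)*x-1)/x := div_pos hd1 hx0
    -- lower bound for the tail at m+1
    have h := ih (m+1)
    have hcast : ((((m+1:ℕ):ℝ))+2) = (m:ℝ)+3 := by push_cast; ring
    have hcast2 : (2*x-((m+1:ℕ):ℝ)-3) = 2*x-(m:ℝ)-4 := by push_cast; ring
    rw [hcast, hcast2] at h
    -- denominator bound
    have hden : (((m:ℝ)+2)*x-1)/x ≤ aa x (m+1) + T x (m+1) N := by
      have hv : (((m:ℝ)+2)*x-1)/x - aa x (m+1) ≤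
          min 0 ((((m:ℝ)+3)*(2*x-(m:ℝ)-4))/(((m:ℝ)+3)*x-1)) := by
        apply le_min
        · rw [aa_eq]
          have : (((m:ℝ)+2)*x-1)/x - ((m:ℝ)+2)*(x+1)/x = -(((m:ℝ)+3)/x) := by
            field_simp; ring
          rw [this]
          have : (0:ℝ) ≤ ((m:ℝ)+3)/x := by positivity
          linarith
        · rw [aa_eq]
          have : (((m:ℝ)+2)*x-1)/x - ((m:ℝ)+2)*(x+1)/x = (-((m:ℝ)+3))/x := by
            field_simp; ring
          rw [this, div_le_div_iff₀ hx0 hd2]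
          nlinarith [mul_nonneg (by linarith : (0:ℝ) ≤ (m:ℝ)+3)
            (by nlinarith : (0:ℝ) ≤ 2*x^2 - x - 1)]
      linarith
    have hden0 : (0:ℝ) < aa x (m+1) + T x (m+1) N := lt_of_lt_of_le hδ hden
    rw [T_succ]
    rcases le_or_gt 0 (bb x (m+1)) with hb | hb
    · have : (0:ℝ) ≤ bb x (m+1) / (aa x (m+1) + T x (m+1) N) :=
        div_nonneg hb hden0.le
      exact le_trans (min_le_left _ _) this
    · have h1 : bb x (m+1) / ((((m:ℝ)+2)*x-1)/x) ≤ bb x (m+1) / (aa x (m+1) + T x (m+1) N) := by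
        rw [div_eq_mul_one_div (bb x (m+1)), div_eq_mul_one_div (bb x (m+1))]
        exact mul_le_mul_of_nonpos_left (one_div_le_one_div_of_le hδ hden) hb.le
      have h2 : bb x (m+1) / ((((m:ℝ)+2)*x-1)/x) =
          (((m:ℝ)+2)*(2*x-(m:ℝ)-3))/(((m:ℝ)+2)*x-1) := by
        rw [bb_eq]
        field_simp
      calc min 0 ((((m:ℝ)+2)*(2*x-(m:ℝ)-3))/(((m:ℝ)+2)*x-1))
          ≤ (((m:ℝ)+2)*(2*x-(m:ℝ)-3))/(((m:ℝ)+2)*x-1) := min_le_right _ _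
        _ = bb x (m+1) / ((((m:ℝ)+2)*x-1)/x) := h2.symm
        _ ≤ _ := h1

lemma Tden (hx1 : 1 < x) (N m : ℕ) :
    (((m:ℝ)+2)*x-1)/x ≤ aa x (m+1) + T x (m+1) N := by
  have hx0 : (0:ℝ) < x := lt_trans one_pos hx1
  have hm : (0:ℝ) ≤ (m:ℝ) := Nat.cast_nonneg m
  have hd2 : (0:ℝ) < ((m:ℝ)+3)*x - 1 := by nlinarith
  have h := T_ge hx1 N (m+1)
  have hcast : ((((m+1:ℕ):ℝ))+2) = (m:ℝ)+3 := by push_cast; ring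
  have hcast2 : (2*x-((m+1:ℕ):ℝ)-3) = 2*x-(m:ℝ)-4 := by push_cast; ring
  rw [hcast, hcast2] at h
  have hv : (((m:ℝ)+2)*x-1)/x - aa x (m+1) ≤
      min 0 ((((m:ℝ)+3)*(2*x-(m:ℝ)-4))/(((m:ℝ)+3)*x-1)) := by
    apply le_min
    · rw [aa_eq]
      have : (((m:ℝ)+2)*x-1)/x - ((m:ℝ)+2)*(x+1)/x = -(((m:ℝ)+3)/x) := by
        field_simp; ring
      rw [this]
      have : (0:ℝ) ≤ ((m:ℝ)+3)/x := by positivity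
      linarith
    · rw [aa_eq]
      have : (((m:ℝ)+2)*x-1)/x - ((m:ℝ)+2)*(x+1)/x = (-((m:ℝ)+3))/x := by
        field_simp; ring
      rw [this, div_le_div_iff₀ hx0 hd2]
      nlinarith [mul_nonneg (by linarith : (0:ℝ) ≤ (m:ℝ)+3)
        (by nlinarith : (0:ℝ) ≤ 2*x^2 - x - 1)]
  linarith

lemma Tden0 (hx1 : 1 < x) (N m : ℕ) : (0:ℝ) < aa x (m+1) + T x (m+1) N := by
  have hx0 : (0:ℝ) < x := lt_trans one_pos hx1
  have hm : (0:ℝ) ≤ (m:ℝ) := Nat.cast_nonneg m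
  have hd1 : (0:ℝ) < ((m:ℝ)+2)*x - 1 := by nlinarith
  exact lt_of_lt_of_le (div_pos hd1 hx0) (Tden hx1 N m)

lemma TK (hx1 : 1 < x) :
    ∀ N m, 0 < K x m (N+1) ∧ T x m (N+1) * K x m (N+1) = bb x (m+1) * K x (m+1) N := by
  have hx0 : (0:ℝ) < x := lt_trans one_pos hx1
  intro N
  induction N with
  | zero =>
    intro m
    have haa : (0:ℝ) < aa x (m+1) := by
      rw [aa_eq]; positivity
    constructor
    · rw [K_one]; exact haa
    · rw [K_one, K_zero, T_succ, T_zero, add_zero, div_mul_cancel₀ _ haa.ne', mul_one]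
  | succ N ih =>
    intro m
    obtain ⟨hKpos, hTK⟩ := ih (m+1)
    have hden0 := Tden0 hx1 (N+1) m
    have hKeq : K x m (N+2) = (aa x (m+1) + T x (m+1) (N+1)) * K x (m+1) (N+1) := by
      rw [K_succ2, ← hTK]; ring
    constructor
    · rw [hKeq]; exact mul_pos hden0 hKpos
    · rw [T_succ, hKeq]
      field_simp

lemma K_pos (hx1 : 1 < x) (N m : ℕ) : 0 < K x m N := by
  cases N with
  | zero => rw [K_zero]; norm_num
  | succ N => exact (TK hx1 N m).1

lemma qS (hx1 : 1 < x) : ∀ N, K x 0 N = (Nat.factorial (N+1) : ℝ) * S x N := by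
  have hx0 : (0:ℝ) < x := lt_trans one_pos hx1
  have hx : x ≠ 0 := hx0.ne'
  intro N
  induction N using Nat.strong_induction_on with
  | _ N ih =>
    match N, ih with
    | 0, _ =>
      rw [K_zero]
      simp [S, g, co, Cq]
    | 1, _ =>
      rw [K_one, aa_eq]
      simp only [S, Finset.sum_range_succ, Finset.sum_range_zero, g, co, Cq]
      norm_num [Nat.factorial]
      field_simp
      ring
    | (N+2), ih =>
      have i1 := ih (N+1) (by omega)
      have i0 := ih N (by omega)
      have htail := K_tail (x := x) N 0
      rw [show 0 + N + 2 = (N+1)+1 from by omega] at htail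
      rw [htail, i1, i0, aa_eq, bb_eq]
      have hf2 : (Nat.factorial (N+3) : ℝ) = ((N:ℝ)+3) * (Nat.factorial (N+2) : ℝ) := by
        rw [show N+3 = (N+2)+1 from rfl, Nat.factorial_succ]; push_cast; ring
      have hf1 : (Nat.factorial (N+2) : ℝ) = ((N:ℝ)+2) * (Nat.factorial (N+1) : ℝ) := by
        rw [show N+2 = (N+1)+1 from rfl, Nat.factorial_succ]; push_cast; ring
      have hc1 : (((N+1:ℕ):ℝ)+2) = (N:ℝ)+3 := by push_cast; ring
      have hc2 : (2*x - ((N+1:ℕ):ℝ) - 3) = 2*x - (N:ℝ) - 4 := by push_cast; ring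
      rw [hc1, hc2, hf2, hf1]
      have hS := Skey hx N
      rw [div_mul_eq_mul_div, div_mul_eq_mul_div, ← add_div, div_eq_iff hx]
      linear_combination (-((N:ℝ)+3)) * (Nat.factorial (N+1) : ℝ) * hS

lemma pp_rec (N : ℕ) : pp x (N+2) = aa x (N+2) * pp x (N+1) + bb x (N+2) * pp x N := by
  cases N with
  | zero =>
    show bb x 1 * K x 1 1 = aa x 2 * (bb x 1 * K x 1 0) + bb x 2 * 0
    rw [K_one, K_zero, show (1:ℕ)+1 = 2 from rfl]
    ring
  | succ M =>
    show bb x 1 * K x 1 (M+2) = aa x (M+3) * (bb x 1 * K x 1 (M+1)) + bb x (M+3) * (bb x 1 * K x 1 M)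
    have htail := K_tail (x := x) M 1
    rw [show 1 + M + 2 = M+3 from by omega] at htail
    rw [htail]
    ring

lemma ppW (hx1 : 1 < x) : ∀ N, pp x N = (Nat.factorial (N+1) : ℝ) * W x N := by
  have hx0 : (0:ℝ) < x := lt_trans one_pos hx1
  have hx : x ≠ 0 := hx0.ne'
  have h2x : 2*x - 1 ≠ 0 := (two_x_sub_one_pos hx1).ne'
  intro N
  induction N using Nat.strong_induction_on with
  | _ N ih =>
    match N, ih with
    | 0, _ =>
      show (0:ℝ) = _
      simp only [W, S, Vv, Av, Finset.sum_range_succ, Finset.sum_range_zero, g, co, Cq]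
      norm_num
    | 1, _ =>
      show bb x 1 * K x 1 0 = _
      rw [K_zero, bb_eq]
      simp only [W, S, Vv, Av, Finset.sum_range_succ, Finset.sum_range_zero, g, co, Cq]
      norm_num [Nat.factorial]
      field_simp
      ring
    | (N+2), ih =>
      have i1 := ih (N+1) (by omega)
      have i0 := ih N (by omega)
      rw [pp_rec, i1, i0, aa_eq, bb_eq]
      have hf2 : (Nat.factorial (N+3) : ℝ) = ((N:ℝ)+3) * (Nat.factorial (N+2) : ℝ) := by
        rw [show N+3 = (N+2)+1 from rfl, Nat.factorial_succ]; push_cast; ring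
      have hf1 : (Nat.factorial (N+2) : ℝ) = ((N:ℝ)+2) * (Nat.factorial (N+1) : ℝ) := by
        rw [show N+2 = (N+1)+1 from rfl, Nat.factorial_succ]; push_cast; ring
      have hc1 : (((N+1:ℕ):ℝ)+2) = (N:ℝ)+3 := by push_cast; ring
      have hc2 : (2*x - ((N+1:ℕ):ℝ) - 3) = 2*x - (N:ℝ) - 4 := by push_cast; ring
      rw [hc1, hc2, hf2, hf1]
      have hW := Wkey hx1 N
      rw [div_mul_eq_mul_div, div_mul_eq_mul_div, ← add_div, div_eq_iff hx]
      linear_combination (-((N:ℝ)+3)) * (Nat.factorial (N+1) : ℝ) * hW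


lemma co_zero : co x 0 = 1 := rfl
lemma co_succ (k : ℕ) : co x (k+1) = co x k * ((k:ℝ)+1-2*x) / ((k:ℝ)+1) := rfl

noncomputable def Fp (x : ℝ) (n : ℕ) (s : ℝ) : ℝ := ∑ k ∈ Finset.range (n+1), co x k * s^k
noncomputable def Fd (x : ℝ) (n : ℕ) (s : ℝ) : ℝ :=
  ∑ k ∈ Finset.range (n+1), co x k * ((k:ℝ) * s^(k-1))

lemma Fp_hasDeriv (n : ℕ) (s : ℝ) : HasDerivAt (fun s => Fp x n s) (Fd x n s) s := by
  unfold Fp Fd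
  exact HasDerivAt.fun_sum fun k _ => (hasDerivAt_pow k s).const_mul (co x k)

lemma sumID (n : ℕ) (s : ℝ) :
    (2*x-1) * Fp x n s + (1-s) * Fd x n s = (2*x-1-(n:ℝ)) * co x n * s^n := by
  induction n with
  | zero =>
    simp [Fp, Fd, co_zero]
  | succ n ih =>
    have hco : co x (n+1) * ((n:ℝ)+1) = co x n * ((n:ℝ)+1-2*x) := by
      rw [co_succ]
      have : ((n:ℝ)+1) ≠ 0 := by positivity
      field_simp
    unfold Fp Fd at ih ⊢
    rw [Finset.sum_range_succ (fun k => co x k * s^k) (n+1),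
      Finset.sum_range_succ (fun k => co x k * ((k:ℝ) * s^(k-1))) (n+1)]
    rw [show (n+1) - 1 = n from rfl]
    push_cast
    linear_combination ih + ((1-s)*s^n + s^(n+1)) * hco

lemma Fp_at_zero (n : ℕ) : Fp x n 0 = 1 := by
  unfold Fp
  rw [Finset.sum_eq_single 0]
  · rw [pow_zero, mul_one, co_zero]
  · intro k _ hk
    rw [zero_pow hk, mul_zero]
  · intro h
    exact absurd (Finset.mem_range.mpr (Nat.succ_pos n)) h

lemma phi_bound (hx1 : 1 < x) (n : ℕ) :
    |Fp x n (1/x) * (1 - 1/x)^(-(2*x-1)) - 1| ≤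
      ((1-1/x)^(-(2*x-1)-1) * (1/x)) * (|2*x-1-(n:ℝ)| * |co x n| * (1/x)^n) := by
  have hx0 : (0:ℝ) < x := lt_trans one_pos hx1
  set t : ℝ := 1/x with htdef
  have ht0 : 0 < t := by positivity
  have ht1 : t < 1 := by rw [htdef, div_lt_one hx0]; exact hx1
  have h1t : 0 < 1 - t := by linarith
  have hderiv : ∀ s ∈ Set.uIcc (0:ℝ) t, HasDerivAt (fun s => Fp x n s * (1-s)^(-(2*x-1)))
      ((1-s)^(-(2*x-1)-1) * ((2*x-1-(n:ℝ)) * co x n * s^n)) s := by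
    intro s hs
    rw [Set.uIcc_of_le ht0.le] at hs
    have h1s : 0 < 1 - s := by have := hs.2; linarith
    have h2 : HasDerivAt (fun s:ℝ => 1 - s) (-1) s := (hasDerivAt_id s).const_sub 1
    have hr : HasDerivAt (fun s : ℝ => (1-s)^(-(2*x-1)))
        ((-(2*x-1)) * (1-s)^(-(2*x-1)-1) * (-1)) s := by
      exact (Real.hasDerivAt_rpow_const (Or.inl h1s.ne')).comp s h2
    have hprod := (Fp_hasDeriv (x := x) n s).fun_mul hr
    refine hprod.congr_deriv ?_
    symm
    have hpow : (1-s)^(-(2*x-1)-1) = (1-s)^(-(2*x-1)) / (1-s) :=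
      Real.rpow_sub_one h1s.ne' _
    have hAB : (1-s)^(-(2*x-1)) = (1-s)^(-(2*x-1)-1) * (1-s) := by
      rw [hpow]; field_simp
    have hid := sumID (x := x) n s
    rw [hAB]
    linear_combination (-(1-s)^(-(2*x-1)-1)) * hid
  have hc1 : (-(2*x-1)-1 : ℝ) ≤ 0 := by nlinarith
  have hInt : IntervalIntegrable
      (fun s => (1-s)^(-(2*x-1)-1) * ((2*x-1-(n:ℝ)) * co x n * s^n))
      MeasureTheory.volume 0 t := by
    apply ContinuousOn.intervalIntegrable
    apply ContinuousOn.mul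
    · apply ContinuousOn.rpow_const (continuousOn_const.sub continuousOn_id)
      intro s hs
      rw [Set.uIcc_of_le ht0.le] at hs
      left
      have := hs.2
      have hs1 : s < 1 := lt_of_le_of_lt this ht1
      show (1:ℝ) - s ≠ 0
      intro h
      linarith [sub_eq_zero.mp h]
    · exact (continuous_const.mul (continuous_pow n)).continuousOn
  have hFTC := intervalIntegral.integral_eq_sub_of_hasDerivAt hderiv hInt
  have hbound : ∀ s ∈ Set.uIoc (0:ℝ) t,
      ‖(1-s)^(-(2*x-1)-1) * ((2*x-1-(n:ℝ)) * co x n * s^n)‖ ≤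
        (1-t)^(-(2*x-1)-1) * (|2*x-1-(n:ℝ)| * |co x n| * t^n) := by
    intro s hs
    rw [Set.uIoc_of_le ht0.le] at hs
    obtain ⟨hs0, hst⟩ := hs
    have h1s : 0 < 1 - s := by linarith [lt_of_le_of_lt hst ht1]
    rw [Real.norm_eq_abs, abs_mul, abs_mul, abs_mul]
    have e1 : |(1-s)^(-(2*x-1)-1)| = (1-s)^(-(2*x-1)-1) :=
      abs_of_pos (Real.rpow_pos_of_pos h1s _)
    have e2 : |s^n| = s^n := abs_of_nonneg (by positivity)
    rw [e1, e2]
    have b1 : (1-s)^(-(2*x-1)-1) ≤ (1-t)^(-(2*x-1)-1) :=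
      Real.rpow_le_rpow_of_nonpos h1t (by linarith) hc1
    have b2 : s^n ≤ t^n := pow_le_pow_left₀ hs0.le hst n
    have hnn : (0:ℝ) ≤ |2*x-1-(n:ℝ)| * |co x n| := by positivity
    calc (1-s)^(-(2*x-1)-1) * (|2*x-1-(n:ℝ)| * |co x n| * s^n)
        ≤ (1-t)^(-(2*x-1)-1) * (|2*x-1-(n:ℝ)| * |co x n| * s^n) := by
          apply mul_le_mul_of_nonneg_right b1 (by positivity)
      _ ≤ (1-t)^(-(2*x-1)-1) * (|2*x-1-(n:ℝ)| * |co x n| * t^n) := by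
          apply mul_le_mul_of_nonneg_left _ (Real.rpow_pos_of_pos h1t _).le
          exact mul_le_mul_of_nonneg_left b2 hnn
  have hnorm := intervalIntegral.norm_integral_le_of_norm_le_const hbound
  rw [hFTC] at hnorm
  simp only [Fp_at_zero, sub_zero, Real.one_rpow, mul_one, one_mul] at hnorm
  rw [Real.norm_eq_abs, abs_of_pos ht0] at hnorm
  calc |Fp x n t * (1-t)^(-(2*x-1)) - 1|
      ≤ (1-t)^(-(2*x-1)-1) * (|2*x-1-(n:ℝ)| * |co x n| * t^n) * t := hnorm
    _ = ((1-t)^(-(2*x-1)-1) * t) * (|2*x-1-(n:ℝ)| * |co x n| * t^n) := by ring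

lemma summable_aux (hx1 : 1 < x) :
    Summable (fun n : ℕ => ((n:ℝ)+1) * |co x n| * (1/x)^n) := by
  have hx0 : (0:ℝ) < x := lt_trans one_pos hx1
  have ht0 : (0:ℝ) < 1/x := by positivity
  have ht1 : (1:ℝ)/x < 1 := by rw [div_lt_one hx0]; exact hx1
  have hnn : ∀ m : ℕ, (0:ℝ) ≤ ((m:ℝ)+1) * |co x m| * (1/x)^m := fun m =>
    mul_nonneg (mul_nonneg (by positivity) (abs_nonneg _)) (pow_nonneg ht0.le m)
  apply summable_of_ratio_norm_eventually_le ht1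
  obtain ⟨N1, hN1⟩ := exists_nat_ge (2*x)
  filter_upwards [eventually_ge_atTop N1] with n hn
  have h2x : 2*x ≤ (n:ℝ) := le_trans hN1 (by exact_mod_cast hn)
  have hn1 : (0:ℝ) < (n:ℝ)+1 := by positivity
  rw [Real.norm_eq_abs, Real.norm_eq_abs, abs_of_nonneg (hnn (n+1)), abs_of_nonneg (hnn n)]
  have hcoabs : |co x (n+1)| = |co x n| * (((n:ℝ)+1-2*x) / ((n:ℝ)+1)) := by
    rw [co_succ, abs_div, abs_mul, abs_of_nonneg (by linarith : (0:ℝ) ≤ (n:ℝ)+1-2*x),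
      abs_of_pos hn1, mul_div_assoc]
  have hcast : (((n+1:ℕ):ℝ)+1) = (n:ℝ)+2 := by push_cast; ring
  rw [hcast, hcoabs]
  have key : ((n:ℝ)+2) * (((n:ℝ)+1-2*x) / ((n:ℝ)+1)) ≤ (n:ℝ)+1 := by
    rw [mul_div_assoc', div_le_iff₀ hn1]
    nlinarith
  calc ((n:ℝ)+2) * (|co x n| * (((n:ℝ)+1-2*x)/((n:ℝ)+1))) * (1/x)^(n+1)
      = (((n:ℝ)+2) * (((n:ℝ)+1-2*x)/((n:ℝ)+1))) * (|co x n| * (1/x)^n) * (1/x) := by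
        rw [pow_succ]; ring
    _ ≤ (((n:ℝ)+1)) * (|co x n| * (1/x)^n) * (1/x) := by
        apply mul_le_mul_of_nonneg_right _ ht0.le
        exact mul_le_mul_of_nonneg_right key
          (mul_nonneg (abs_nonneg _) (pow_nonneg ht0.le n))
    _ = 1/x * (((n:ℝ)+1) * |co x n| * (1/x)^n) := by ring

lemma err_tendsto (hx1 : 1 < x) :
    Tendsto (fun n : ℕ => |2*x-1-(n:ℝ)| * |co x n| * (1/x)^n) atTop (nhds 0) := by
  have hx0 : (0:ℝ) < x := lt_trans one_pos hx1
  have ht0 : (0:ℝ) < 1/x := by positivity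
  have hsum := summable_aux hx1
  have h0 := hsum.tendsto_atTop_zero
  have hmul : Tendsto (fun n : ℕ => (|2*x-1|+1) * (((n:ℝ)+1) * |co x n| * (1/x)^n))
      atTop (nhds 0) := by
    have h2 := h0.const_mul (|2*x-1|+1)
    simpa using h2
  apply squeeze_zero_norm _ hmul
  intro n
  have hnn0 : (0:ℝ) ≤ |2*x-1-(n:ℝ)| * |co x n| * (1/x)^n :=
    mul_nonneg (mul_nonneg (abs_nonneg _) (abs_nonneg _)) (pow_nonneg ht0.le n)
  rw [Real.norm_eq_abs, abs_of_nonneg hnn0]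
  have h1 : |2*x-1-(n:ℝ)| ≤ (|2*x-1|+1) * ((n:ℝ)+1) := by
    have hA := le_abs_self (2*x-1)
    have hB := neg_abs_le (2*x-1)
    have hC := abs_nonneg (2*x-1)
    have hD : (0:ℝ) ≤ (n:ℝ) := Nat.cast_nonneg n
    rcases abs_cases (2*x-1-(n:ℝ)) with ⟨he, _⟩ | ⟨he, _⟩ <;> rw [he] <;> nlinarith
  calc |2*x-1-(n:ℝ)| * |co x n| * (1/x)^n
      ≤ ((|2*x-1|+1) * ((n:ℝ)+1)) * |co x n| * (1/x)^n := by
        apply mul_le_mul_of_nonneg_right _ (pow_nonneg ht0.le n)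
        exact mul_le_mul_of_nonneg_right h1 (abs_nonneg _)
    _ = (|2*x-1|+1) * (((n:ℝ)+1) * |co x n| * (1/x)^n) := by ring


lemma Fp_tendsto (hx1 : 1 < x) :
    Tendsto (fun n => Fp x n (1/x)) atTop (nhds (((x-1)/x) ^ (2*x-1))) := by
  have hx0 : (0:ℝ) < x := lt_trans one_pos hx1
  have ht1 : (1:ℝ)/x < 1 := by rw [div_lt_one hx0]; exact hx1
  have h1t : (0:ℝ) < 1 - 1/x := by linarith
  have herr := err_tendsto hx1
  have herr2 : Tendsto (fun n : ℕ =>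
      ((1-1/x)^(-(2*x-1)-1) * (1/x)) * (|2*x-1-(n:ℝ)| * |co x n| * (1/x)^n)) atTop (nhds 0) := by
    have h2 := herr.const_mul ((1-1/x)^(-(2*x-1)-1) * (1/x))
    simpa using h2
  have hphi : Tendsto (fun n => Fp x n (1/x) * (1-1/x)^(-(2*x-1)) - 1) atTop (nhds 0) := by
    apply squeeze_zero_norm _ herr2
    intro n
    rw [Real.norm_eq_abs]
    exact phi_bound hx1 n
  have hphi1 : Tendsto (fun n => Fp x n (1/x) * (1-1/x)^(-(2*x-1))) atTop (nhds 1) := by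
    have h3 := hphi.add_const 1
    simpa using h3
  have hA : (1-1/x)^(-(2*x-1)) * (1-1/x)^(2*x-1) = 1 := by
    rw [← Real.rpow_add h1t]; norm_num
  have h4 := hphi1.mul_const ((1-1/x)^(2*x-1))
  rw [one_mul] at h4
  have h5 : Tendsto (fun n => Fp x n (1/x)) atTop (nhds ((1-1/x)^(2*x-1))) := by
    apply h4.congr
    intro n
    rw [mul_assoc, hA, mul_one]
  have hxx : (1:ℝ) - 1/x = (x-1)/x := by field_simp
  rwa [hxx] at h5

lemma S_pos (hx1 : 1 < x) (n : ℕ) : 0 < S x n := by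
  have hK := K_pos hx1 n 0
  have hq := qS hx1 n
  rw [hq] at hK
  have hF : (0:ℝ) < (Nat.factorial (n+1) : ℝ) := by positivity
  rcases mul_pos_iff.mp hK with ⟨_, h⟩ | ⟨h, _⟩
  · exact h
  · exact absurd h (not_lt.mpr hF.le)

lemma Cq_pos (n : ℕ) : 0 < Cq (n:ℝ) := by
  simp only [Cq]; positivity

lemma ratio_bound (n k : ℕ) (hkn : k ≤ n) :
    |Cq ((n:ℝ)-(k:ℝ)) / Cq (n:ℝ) - 1| ≤ 2*(k:ℝ)/((n:ℝ)+1) := by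
  have hk0 : (0:ℝ) ≤ (k:ℝ) := Nat.cast_nonneg k
  have hkn' : (k:ℝ) ≤ (n:ℝ) := Nat.cast_le.mpr hkn
  have hn1 : (0:ℝ) < (n:ℝ)+1 := by positivity
  have hCq := Cq_pos n
  have e : Cq ((n:ℝ)-(k:ℝ)) / Cq (n:ℝ) - 1 = (Cq ((n:ℝ)-(k:ℝ)) - Cq (n:ℝ)) / Cq (n:ℝ) := by
    field_simp
  rw [e, abs_div, abs_of_pos hCq]
  have hnum : |Cq ((n:ℝ)-(k:ℝ)) - Cq (n:ℝ)| = Cq (n:ℝ) - Cq ((n:ℝ)-(k:ℝ)) := by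
    rw [abs_of_nonpos]
    · ring
    · simp only [Cq]; nlinarith
  rw [hnum, div_le_div_iff₀ hCq hn1]
  simp only [Cq]
  nlinarith [mul_nonneg (mul_nonneg hk0 hn1.le) (by linarith : (0:ℝ) ≤ (k:ℝ)+1)]

lemma S_div_Cq (hx1 : 1 < x) :
    Tendsto (fun n => S x n / Cq (n:ℝ)) atTop (nhds (((x-1)/x) ^ (2*x-1))) := by
  have hx0 : (0:ℝ) < x := lt_trans one_pos hx1
  have ht0 : (0:ℝ) < 1/x := by positivity
  have hsum := summable_aux hx1
  set Mg : ℝ := ∑' k : ℕ, ((k:ℝ)+1) * |co x k| * (1/x)^k with hMg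
  have hbound : ∀ n : ℕ, |S x n / Cq (n:ℝ) - Fp x n (1/x)| ≤ 2*Mg/((n:ℝ)+1) := by
    intro n
    have hn1 : (0:ℝ) < (n:ℝ)+1 := by positivity
    have e1 : S x n / Cq (n:ℝ) - Fp x n (1/x) =
        ∑ k ∈ Finset.range (n+1), g x k * (Cq ((n:ℝ)-(k:ℝ)) / Cq (n:ℝ) - 1) := by
      unfold S Fp
      rw [Finset.sum_div, ← Finset.sum_sub_distrib]
      apply Finset.sum_congr rfl
      intro k _
      have : g x k * Cq ((n:ℝ)-(k:ℝ)) / Cq (n:ℝ) = g x k * (Cq ((n:ℝ)-(k:ℝ)) / Cq (n:ℝ)) := by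
        ring
      rw [this]
      have hg : co x k * (1/x)^k = g x k := rfl
      rw [hg]
      ring
    rw [e1]
    calc |∑ k ∈ Finset.range (n+1), g x k * (Cq ((n:ℝ)-(k:ℝ)) / Cq (n:ℝ) - 1)|
        ≤ ∑ k ∈ Finset.range (n+1), |g x k * (Cq ((n:ℝ)-(k:ℝ)) / Cq (n:ℝ) - 1)| :=
          Finset.abs_sum_le_sum_abs _ _
      _ ≤ ∑ k ∈ Finset.range (n+1), |g x k| * (2*(k:ℝ)/((n:ℝ)+1)) := by
          apply Finset.sum_le_sum
          intro k hk
          rw [abs_mul]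
          exact mul_le_mul_of_nonneg_left
            (ratio_bound n k (Nat.lt_succ_iff.mp (Finset.mem_range.mp hk)))
            (abs_nonneg _)
      _ = (2/((n:ℝ)+1)) * ∑ k ∈ Finset.range (n+1), (k:ℝ) * |g x k| := by
          rw [Finset.mul_sum]
          apply Finset.sum_congr rfl
          intro k _
          ring
      _ ≤ (2/((n:ℝ)+1)) * Mg := by
          apply mul_le_mul_of_nonneg_left _ (by positivity)
          calc ∑ k ∈ Finset.range (n+1), (k:ℝ) * |g x k|
              ≤ ∑ k ∈ Finset.range (n+1), ((k:ℝ)+1) * |co x k| * (1/x)^k := by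
                apply Finset.sum_le_sum
                intro k _
                have hg : |g x k| = |co x k| * (1/x)^k := by
                  have : g x k = co x k * (1/x)^k := rfl
                  rw [this, abs_mul, abs_of_nonneg (pow_nonneg ht0.le k)]
                rw [hg]
                have h1 : (0:ℝ) ≤ |co x k| * (1/x)^k :=
                  mul_nonneg (abs_nonneg _) (pow_nonneg ht0.le k)
                nlinarith [h1]
            _ ≤ Mg := by
                apply Summable.sum_le_tsum
                · intro k _
                  exact mul_nonneg (mul_nonneg (by positivity) (abs_nonneg _))
                    (pow_nonneg ht0.le k)
                · exact hsum
      _ = 2*Mg/((n:ℝ)+1) := by ring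
  have hz : Tendsto (fun n : ℕ => 2*Mg/((n:ℝ)+1)) atTop (nhds 0) := by
    have h3 := tendsto_const_div_atTop_nhds_zero_nat (2*Mg)
    have h4 := (tendsto_add_atTop_iff_nat 1).mpr h3
    apply h4.congr
    intro n
    push_cast
    ring
  have hdiff : Tendsto (fun n => S x n / Cq (n:ℝ) - Fp x n (1/x)) atTop (nhds 0) := by
    apply squeeze_zero_norm _ hz
    intro n
    rw [Real.norm_eq_abs]
    exact hbound n
  have := hdiff.add (Fp_tendsto hx1)
  rw [zero_add] at this
  apply this.congr
  intro n
  ring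

lemma foldr_T : ∀ (N m : ℕ),
    (List.range N).foldr (fun i acc => bb x (i+1+m) / (aa x (i+1+m) + acc)) 0 = T x m N := by
  intro N
  induction N with
  | zero => intro m; rfl
  | succ N ih =>
    intro m
    rw [List.range_succ_eq_map, List.foldr_cons, List.foldr_map]
    have hfun : (fun (i : ℕ) (acc : ℝ) => bb x (Nat.succ i+1+m) / (aa x (Nat.succ i+1+m) + acc))
        = (fun i acc => bb x (i+1+(m+1)) / (aa x (i+1+(m+1)) + acc)) := by
      funext i acc
      rw [show Nat.succ i + 1 + m = i+1+(m+1) from by omega]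
    rw [hfun, ih (m+1)]
    rw [show 0+1+m = m+1 from by omega]
    rfl

lemma cf_eq_T (N : ℕ) : cf (bb x) (aa x) N = T x 0 N := by
  rw [← foldr_T (x := x) N 0]
  rfl

lemma cf_formula (hx1 : 1 < x) (N : ℕ) :
    cf (bb x) (aa x) (N+1) = (Av x - 2) + Vv x (N+1) / S x (N+1) := by
  obtain ⟨hK, hTK⟩ := TK hx1 N 0
  have hq := qS hx1 (N+1)
  have hp := ppW hx1 (N+1)
  have hppdef : pp x (N+1) = bb x 1 * K x 1 N := rfl
  have hF : (0:ℝ) < (Nat.factorial (N+2) : ℝ) := by positivity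
  have hS := S_pos hx1 (N+1)
  rw [cf_eq_T]
  have hT : T x 0 (N+1) = pp x (N+1) / K x 0 (N+1) := by
    rw [eq_div_iff hK.ne', hppdef]
    exact hTK
  rw [hT, hq, hp, mul_div_mul_left _ _ hF.ne']
  rw [W]
  field_simp

end CFAux

open CFAux

theorem cf_self_power_variant (x : ℝ) (hx : 1 < x) :
    Tendsto
      (cf (fun n => ((n : ℝ) + 1) * (2 * x - n - 2) / x)
          (fun n => ((n : ℝ) + 1) * (x + 1) / x)) atTop
      (nhds ((x - 1) / (2 * x - 1) * ((x / (x - 1)) ^ (2 * x - 1) - 1) - 2)) := by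
  have hx0 : (0:ℝ) < x := lt_trans one_pos hx
  have hxm1 : (0:ℝ) < x - 1 := by linarith
  have h2x : (0:ℝ) < 2*x - 1 := by linarith
  set G : ℝ := ((x-1)/x) ^ (2*x-1) with hG
  have hGpos : 0 < G := Real.rpow_pos_of_pos (by positivity) _
  have hfun1 : (fun n : ℕ => ((n : ℝ) + 1) * (2 * x - n - 2) / x) = bb x := rfl
  have hfun2 : (fun n : ℕ => ((n : ℝ) + 1) * (x + 1) / x) = aa x := rfl
  rw [hfun1, hfun2, ← tendsto_add_atTop_iff_nat 1]
  -- limits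
  have hVC : ∀ n : ℕ, Vv x n / Cq (n:ℝ) = -Av x + 2/((n:ℝ)+1) := by
    intro n
    have h1 : ((n:ℝ)+1) ≠ 0 := by positivity
    have h2 : ((n:ℝ)+2) ≠ 0 := by positivity
    simp only [Vv, Cq]
    field_simp
    ring
  have h2n : Tendsto (fun n : ℕ => 2/((n:ℝ)+1)) atTop (nhds 0) := by
    have h3 := tendsto_const_div_atTop_nhds_zero_nat (2:ℝ)
    have h4 := (tendsto_add_atTop_iff_nat 1).mpr h3
    apply h4.congr
    intro n
    push_cast
    ring
  have hVt : Tendsto (fun n : ℕ => Vv x n / Cq (n:ℝ)) atTop (nhds (-Av x)) := by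
    have h5 := h2n.const_add (-Av x)
    rw [add_zero] at h5
    apply h5.congr
    intro n
    rw [hVC n]
  have hSC := S_div_Cq hx
  have hdiv : Tendsto (fun n : ℕ => Vv x n / S x n) atTop (nhds (-Av x / G)) := by
    have h6 := hVt.div hSC hGpos.ne'
    apply h6.congr
    intro n
    show Vv x n / Cq (n:ℝ) / (S x n / Cq (n:ℝ)) = Vv x n / S x n
    rw [div_div_div_cancel_right₀]
    exact (Cq_pos n).ne'
  have hdiv2 : Tendsto (fun N : ℕ => Vv x (N+1) / S x (N+1)) atTop (nhds (-Av x / G)) :=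
    hdiv.comp (tendsto_add_atTop_nat 1)
  have hfinal : Tendsto (fun N : ℕ => (Av x - 2) + Vv x (N+1) / S x (N+1)) atTop
      (nhds ((Av x - 2) + (-Av x / G))) :=
    (tendsto_const_nhds).add hdiv2
  have hGinv : (x/(x-1)) ^ (2*x-1) = G⁻¹ := by
    apply eq_inv_of_mul_eq_one_left
    rw [hG, ← Real.mul_rpow (by positivity) (by positivity),
      show (x/(x-1)) * ((x-1)/x) = 1 from by field_simp]
    exact Real.one_rpow _
  have heq : (x - 1) / (2 * x - 1) * ((x / (x - 1)) ^ (2 * x - 1) - 1) - 2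
      = (Av x - 2) + (-Av x / G) := by
    rw [hGinv, Av]
    field_simp
    ring
  rw [heq]
  apply hfinal.congr
  intro N
  exact (cf_formula hx N).symm
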